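/- Let e and v be two distinct rank-one projections on a complex Hilbert space H with ‖e − v‖ = 1. Then e and v are orthogonal, i.e., ev = 0. -/

import Mathlib

open scoped InnerProductSpace ComplexConjugate

lemma exists_unit_vec {H : Type*} [NormedAddCommGroup H]
    [InnerProductSpace ℂ H] [CompleteSpace H] (e : H →L[ℂ] H)
    (hei : IsIdempotentElem e) (hes : IsSelfAdjoint e)
    (hre : Module.finrank ℂ (LinearMap.range (e : H →ₗ[ℂ] H)) = 1) :
    ∃ x : H, ‖x‖ = 1 ∧ ∀ h : H, e h = (⟪x, h⟫_ℂ) • x := by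
  obtain ⟨x₀, hx0ne, hx0span⟩ := finrank_eq_one_iff'.mp hre
  have hx0H : (x₀ : H) ≠ 0 := fun hh => hx0ne (Subtype.ext hh)
  set x : H := (‖(x₀ : H)‖⁻¹ : ℂ) • (x₀ : H) with hxdef
  have hxnorm : ‖x‖ = 1 := by
    rw [hxdef, norm_smul]
    simp [norm_pos_iff.mpr hx0H, inv_mul_cancel₀ (norm_ne_zero_iff.mpr hx0H)]
  -- e fixes range elements
  have hfix : ∀ w : H, w ∈ LinearMap.range (e : H →ₗ[ℂ] H) → e w = w := by
    rintro w ⟨u, rfl⟩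
    have := congrArg (fun (f : H →L[ℂ] H) => f u) hei
    simpa [ContinuousLinearMap.mul_apply] using this
  have hx0mem : (x₀ : H) ∈ LinearMap.range (e : H →ₗ[ℂ] H) := x₀.2
  have hex : e x = x := by
    rw [hxdef, map_smul, hfix _ hx0mem]
  have hadj : ∀ a b : H, ⟪e a, b⟫_ℂ = ⟪a, e b⟫_ℂ := fun a b =>
    hes.isSymmetric a b
  refine ⟨x, hxnorm, fun h => ?_⟩
  have hmem : e h ∈ LinearMap.range (e : H →ₗ[ℂ] H) := ⟨h, rfl⟩
  obtain ⟨c, hc⟩ := hx0span ⟨e h, hmem⟩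
  have hc0 : c • (x₀ : H) = e h := congrArg Subtype.val hc
  set a : ℂ := c * ‖(x₀ : H)‖ with hadef
  have hax : a • x = c • (x₀ : H) := by
    rw [hxdef, smul_smul, hadef, mul_assoc, ← Complex.ofReal_inv, ← Complex.ofReal_mul,
      mul_inv_cancel₀ (norm_ne_zero_iff.mpr hx0H)]
    simp
  have ha : e h = a • x := by rw [hax, hc0]
  have hinner : ⟪x, e h⟫_ℂ = a := by
    rw [ha, inner_smul_right, inner_self_eq_norm_sq_to_K, hxnorm]
    norm_num
  have hinner2 : ⟪x, e h⟫_ℂ = ⟪x, h⟫_ℂ := by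
    rw [← hadj x h, hex]
  rw [ha, ← hinner, hinner2]


/-- Two distinct rank-one projections on a complex Hilbert space at distance `1` are
orthogonal. -/
theorem rank_one_projections_dist_one_orthogonal {H : Type*} [NormedAddCommGroup H]
    [InnerProductSpace ℂ H] [CompleteSpace H] (e v : H →L[ℂ] H)
    (hei : IsIdempotentElem e) (hes : IsSelfAdjoint e)
    (hvi : IsIdempotentElem v) (hvs : IsSelfAdjoint v)
    (hre : Module.finrank ℂ (LinearMap.range (e : H →ₗ[ℂ] H)) = 1)
    (hrv : Module.finrank ℂ (LinearMap.range (v : H →ₗ[ℂ] H)) = 1)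
    (hne : e ≠ v) (hdist : ‖e - v‖ = 1) :
    e * v = 0 := by
  obtain ⟨x, hx1, hxf⟩ := exists_unit_vec e hei hes hre
  obtain ⟨y, hy1, hyf⟩ := exists_unit_vec v hvi hvs hrv
  set c : ℂ := ⟪x, y⟫_ℂ with hcdef
  set k : ℂ := ⟪y, x⟫_ℂ * ⟪x, y⟫_ℂ with hkdef
  have hxx : ⟪x, x⟫_ℂ = 1 := by
    rw [inner_self_eq_norm_sq_to_K, hx1]; norm_num
  have hyy : ⟪y, y⟫_ℂ = 1 := by
    rw [inner_self_eq_norm_sq_to_K, hy1]; norm_num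
  have h3 : (e - v) * ((e - v) * (e - v)) = (1 - k) • (e - v) := by
    ext h
    simp only [hxx, hyy, ContinuousLinearMap.mul_apply, ContinuousLinearMap.sub_apply,
      ContinuousLinearMap.smul_apply, map_sub, hxf, hyf, inner_sub_right, inner_smul_right,
      smul_smul, sub_smul, smul_sub, one_smul, hkdef]
    module
  have h4 : ((e - v) * (e - v)) * ((e - v) * (e - v)) = (1 - k) • ((e - v) * (e - v)) := by
    have := congrArg (· * (e - v)) h3
    simpa [smul_mul_assoc, mul_assoc] using this
  have hd : IsSelfAdjoint (e - v) := hes.sub hvs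
  have hd2 : IsSelfAdjoint ((e - v) * (e - v)) := by
    rw [IsSelfAdjoint, star_mul, hd.star_eq]
  have n2 : ‖(e - v) * (e - v)‖ = 1 := by
    have := CStarRing.norm_star_mul_self (x := e - v)
    rw [hd.star_eq, hdist] at this
    rw [this]; ring
  have n4 : ‖((e - v) * (e - v)) * ((e - v) * (e - v))‖ = 1 := by
    have := CStarRing.norm_star_mul_self (x := (e - v) * (e - v))
    rw [hd2.star_eq, n2] at this
    rw [this]; ring
  rw [h4, norm_smul, n2, mul_one] at n4
  have hk : k = ((‖c‖ ^ 2 : ℝ) : ℂ) := by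
    rw [hkdef, ← inner_conj_symm y x, RCLike.conj_mul]
    norm_cast
  have hcs : ‖c‖ ≤ 1 := by
    have := norm_inner_le_norm (𝕜 := ℂ) x y
    rwa [hx1, hy1, mul_one] at this
  have hkn : ‖(1 - k : ℂ)‖ = 1 - ‖c‖ ^ 2 := by
    rw [hk, show (1 - ((‖c‖ ^ 2 : ℝ) : ℂ)) = (((1 - ‖c‖ ^ 2 : ℝ)) : ℂ) by push_cast; ring,
      Complex.norm_real, Real.norm_eq_abs, abs_of_nonneg (by nlinarith [norm_nonneg c, hcs])]
  have hc0 : c = 0 := by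
    have h1 : (1 : ℝ) - ‖c‖ ^ 2 = 1 := by rw [← hkn, n4]
    have : ‖c‖ = 0 := by nlinarith [norm_nonneg c]
    exact norm_eq_zero.mp this
  ext h
  simp [ContinuousLinearMap.mul_apply, hyf, hxf, inner_smul_right, ← hcdef, hc0]
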